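/- Let F be a field, δ ∈ F, and define Δ_k ∈ F by Δ_0 = 1, Δ_1 = δ, Δ_{k+1} = δ·Δ_k - Δ_{k-1}; assume Δ_k ≠ 0 for 1 ≤ k ≤ n-1. Let B be an associative unital F-algebra containing elements e_1, …, e_{n-1} satisfying the Temperley–Lieb relations: e_i^2 = δ·e_i, e_i e_j e_i = e_i for |i-j| = 1, and e_i e_j = e_j e_i for |i-j| > 1. Define the Jones–Wenzl elements f_k ∈ B by Wenzl's recursion f_1 = 1 and f_{k+1} = f_k - (Δ_{k-1}/Δ_k)·f_k·e_k·f_k. Then for every i with 1 ≤ i ≤ n-1, e_i · f_n = 0 and f_n · e_i = 0. -/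
import Mathlib


/-- The Jones–Wenzl element `f n` annihilates each Temperley–Lieb generator:
`e i * f n = 0` and `f n * e i = 0` for `1 ≤ i ≤ n - 1`. -/
theorem jones_wenzl_annihilates_generators {F : Type*} [Field F] {B : Type*} [Ring B]
    [Algebra F B]
    (n : ℕ) (δ : F) (Δ : ℕ → F)
    (hΔ0 : Δ 0 = 1) (hΔ1 : Δ 1 = δ)
    (hΔrec : ∀ k, Δ (k + 2) = δ * Δ (k + 1) - Δ k)
    (hΔne : ∀ k, 1 ≤ k → k ≤ n - 1 → Δ k ≠ 0)
    (e : ℕ → B)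
    (he1 : ∀ i, 1 ≤ i → i ≤ n - 1 → e i ^ 2 = δ • e i)
    (he2 : ∀ i j, 1 ≤ i → i ≤ n - 1 → 1 ≤ j → j ≤ n - 1 →
      |(i : ℤ) - (j : ℤ)| = 1 → e i * e j * e i = e i)
    (he3 : ∀ i j, 1 ≤ i → i ≤ n - 1 → 1 ≤ j → j ≤ n - 1 →
      1 < |(i : ℤ) - (j : ℤ)| → e i * e j = e j * e i)
    (f : ℕ → B) (hf1 : f 1 = 1)
    (hfrec : ∀ k, 1 ≤ k → k ≤ n - 1 →
      f (k + 1) = f k - (Δ (k - 1) / Δ k) • (f k * e k * f k)) :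
    ∀ i, 1 ≤ i → i ≤ n - 1 → e i * f n = 0 ∧ f n * e i = 0 := by
  intro i hi1 hi2
  have hn2 : 2 ≤ n := by omega
  have key : ∀ m, 1 ≤ m → m ≤ n →
      (∀ j, 1 ≤ j → j + 1 ≤ m → e j * f m = 0 ∧ f m * e j = 0) ∧
      f m * f m = f m ∧
      (∀ j, m + 1 ≤ j → j ≤ n - 1 → e j * f m = f m * e j) ∧
      (m ≤ n - 1 →
        e m * f m * e m * f m = (Δ m / Δ (m - 1)) • (e m * f m) ∧
        f m * e m * f m * e m = (Δ m / Δ (m - 1)) • (f m * e m)) := by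
    intro m hm1
    induction m, hm1 using Nat.le_induction with
    | base =>
      intro _
      refine ⟨fun j hj1 hj2 => absurd hj2 (by omega),
        by rw [hf1, one_mul],
        fun j _ _ => by rw [hf1, one_mul, mul_one],
        fun h1n => ?_⟩
      have he : e 1 * e 1 = δ • e 1 := by rw [← pow_two]; exact he1 1 le_rfl h1n
      constructor <;>
        simp only [hf1, mul_one, one_mul, hΔ1, show (1:ℕ) - 1 = 0 from rfl, hΔ0,
          div_one, he]
    | succ k hk ih =>
      intro hk1n
      obtain ⟨A, B, C, D⟩ := ih (by omega)
      have hkle : k ≤ n - 1 := by omega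
      have hΔk : Δ k ≠ 0 := hΔne k hk hkle
      have hΔkm : Δ (k - 1) ≠ 0 := by
        rcases Nat.eq_or_lt_of_le hk with h | h
        · rw [show k - 1 = 0 from by omega, hΔ0]; exact one_ne_zero
        · exact hΔne (k - 1) (by omega) (by omega)
      set c : F := Δ (k - 1) / Δ k with hc
      set r : F := Δ k / Δ (k - 1) with hr
      have hcr : c * r = 1 := by
        rw [hc, hr]; field_simp
      have hrec : f (k + 1) = f k - c • (f k * e k * f k) := hfrec k hk hkle
      obtain ⟨D1, D2⟩ := D hkle
      -- annihilation of e k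
      have hEk : e k * f (k + 1) = 0 := by
        rw [hrec, mul_sub, mul_smul_comm,
          show e k * (f k * e k * f k) = e k * f k * e k * f k from by noncomm_ring,
          D1, smul_smul, hcr, one_smul, sub_self]
      have hkE : f (k + 1) * e k = 0 := by
        rw [hrec, sub_mul, smul_mul_assoc,
          show f k * e k * f k * e k = f k * e k * f k * e k from rfl,
          D2, smul_smul, hcr, one_smul, sub_self]
      -- annihilation of lower generators
      have hlow : ∀ j, 1 ≤ j → j + 1 ≤ k → e j * f (k + 1) = 0 ∧ f (k + 1) * e j = 0 := by
        intro j hj1 hj2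
        obtain ⟨h0, h0'⟩ := A j hj1 hj2
        constructor
        · rw [hrec, mul_sub, mul_smul_comm,
            show e j * (f k * e k * f k) = (e j * f k) * (e k * f k) from by noncomm_ring,
            h0, zero_mul, smul_zero, sub_zero]
        · rw [hrec, sub_mul, smul_mul_assoc,
            show f k * e k * f k * e j = (f k * e k) * (f k * e j) from by noncomm_ring,
            h0', mul_zero, smul_zero, sub_zero]
      have hA : ∀ j, 1 ≤ j → j + 1 ≤ k + 1 → e j * f (k + 1) = 0 ∧ f (k + 1) * e j = 0 := by
        intro j hj1 hj2
        rcases Nat.eq_or_lt_of_le hj2 with h | h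
        · have : j = k := by omega
          subst this; exact ⟨hEk, hkE⟩
        · exact hlow j hj1 (by omega)
      -- f k absorbs f (k+1)
      have hffl : f k * f (k + 1) = f (k + 1) := by
        rw [hrec, mul_sub, mul_smul_comm,
          show f k * (f k * e k * f k) = (f k * f k) * e k * f k from by noncomm_ring,
          B]
      have hffr : f (k + 1) * f k = f (k + 1) := by
        rw [hrec, sub_mul, smul_mul_assoc,
          show f k * e k * f k * f k = f k * e k * (f k * f k) from by noncomm_ring,
          B]
      -- idempotency
      have hB : f (k + 1) * f (k + 1) = f (k + 1) := by
        have hX : f k * e k * f k * f (k + 1) = 0 := by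
          rw [show f k * e k * f k * f (k + 1) = f k * (e k * (f k * f (k + 1))) from by
              noncomm_ring,
            hffl, hEk, mul_zero]
        calc f (k + 1) * f (k + 1)
            = f k * f (k + 1) - c • (f k * e k * f k * f (k + 1)) := by
              rw [hrec]; rw [sub_mul, smul_mul_assoc]
          _ = f (k + 1) := by rw [hffl, hX, smul_zero, sub_zero]
      -- commutation with higher generators
      have hC : ∀ j, (k + 1) + 1 ≤ j → j ≤ n - 1 → e j * f (k + 1) = f (k + 1) * e j := by
        intro j hj1 hjn
        have hcj : e j * f k = f k * e j := C j (by omega) hjn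
        have hce : e j * e k = e k * e j := by
          refine he3 j k (by omega) hjn hk hkle ?_
          rw [lt_abs]; left
          have : (k : ℤ) + 2 ≤ (j : ℤ) := by exact_mod_cast hj1
          omega
        have hX : e j * (f k * e k * f k) = f k * e k * f k * e j := by
          calc e j * (f k * e k * f k) = (e j * f k) * (e k * f k) := by noncomm_ring
            _ = (f k * e j) * (e k * f k) := by rw [hcj]
            _ = f k * ((e j * e k) * f k) := by noncomm_ring
            _ = f k * ((e k * e j) * f k) := by rw [hce]
            _ = (f k * e k) * (e j * f k) := by noncomm_ring
            _ = (f k * e k) * (f k * e j) := by rw [hcj]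
            _ = f k * e k * f k * e j := by noncomm_ring
        rw [hrec, mul_sub, sub_mul, hcj, mul_smul_comm, smul_mul_assoc, hX]
      refine ⟨hA, hB, hC, ?_⟩
      -- the key identity at level k+1
      intro hk1n'
      have hcomm : e (k + 1) * f k = f k * e (k + 1) := C (k + 1) le_rfl hk1n'
      have hsq : e (k + 1) * e (k + 1) = δ • e (k + 1) := by
        rw [← pow_two]; exact he1 (k + 1) (by omega) hk1n'
      have hJ : e (k + 1) * e k * e (k + 1) = e (k + 1) := by
        refine he2 (k + 1) k (by omega) hk1n' hk hkle ?_
        have : ((k : ℤ) + 1) - (k : ℤ) = 1 := by ring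
        rw [show ((k + 1 : ℕ) : ℤ) = (k : ℤ) + 1 from by push_cast; ring, this]
        simp
      have hΔstep : Δ (k + 1) = δ * Δ k - Δ (k - 1) := by
        have h := hΔrec (k - 1)
        rwa [show k - 1 + 2 = k + 1 from by omega, show k - 1 + 1 = k from by omega] at h
      have hδc : δ - c = Δ (k + 1) / Δ k := by
        rw [hΔstep, hc]; field_simp
      -- e (k+1) * f (k+1) * e (k+1) = (Δ (k+1) / Δ k) • (f k * e (k+1))
      have hT1 : e (k + 1) * f k * e (k + 1) = δ • (f k * e (k + 1)) := by
        rw [hcomm, mul_assoc, hsq, mul_smul_comm]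
      have hT2 : e (k + 1) * (f k * e k * f k) * e (k + 1) = f k * e (k + 1) := by
        calc e (k + 1) * (f k * e k * f k) * e (k + 1)
            = (e (k + 1) * f k) * e k * (f k * e (k + 1)) := by noncomm_ring
          _ = (f k * e (k + 1)) * e k * (e (k + 1) * f k) := by rw [hcomm]
          _ = f k * (e (k + 1) * e k * e (k + 1)) * f k := by noncomm_ring
          _ = f k * e (k + 1) * f k := by rw [hJ]
          _ = (e (k + 1) * f k) * f k := by rw [hcomm]
          _ = e (k + 1) * (f k * f k) := by noncomm_ring
          _ = e (k + 1) * f k := by rw [B]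
          _ = f k * e (k + 1) := hcomm
      have hEFE : e (k + 1) * f (k + 1) * e (k + 1) = (Δ (k + 1) / Δ k) • (f k * e (k + 1)) := by
        calc e (k + 1) * f (k + 1) * e (k + 1)
            = e (k + 1) * f k * e (k + 1)
                - c • (e (k + 1) * (f k * e k * f k) * e (k + 1)) := by
              rw [hrec, mul_sub, sub_mul, mul_smul_comm, smul_mul_assoc]
          _ = δ • (f k * e (k + 1)) - c • (f k * e (k + 1)) := by rw [hT1, hT2]
          _ = (δ - c) • (f k * e (k + 1)) := by rw [sub_smul]
          _ = (Δ (k + 1) / Δ k) • (f k * e (k + 1)) := by rw [hδc]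
      have hsub : (k + 1 : ℕ) - 1 = k := by omega
      rw [hsub]
      constructor
      · calc e (k + 1) * f (k + 1) * e (k + 1) * f (k + 1)
            = (e (k + 1) * f (k + 1) * e (k + 1)) * f (k + 1) := by noncomm_ring
          _ = (Δ (k + 1) / Δ k) • (f k * e (k + 1) * f (k + 1)) := by
              rw [hEFE, smul_mul_assoc]
          _ = (Δ (k + 1) / Δ k) • (e (k + 1) * f (k + 1)) := by
              rw [show f k * e (k + 1) * f (k + 1) = (f k * e (k + 1)) * f (k + 1) from rfl,
                ← hcomm, mul_assoc, hffl]
      · calc f (k + 1) * e (k + 1) * f (k + 1) * e (k + 1)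
            = f (k + 1) * (e (k + 1) * f (k + 1) * e (k + 1)) := by noncomm_ring
          _ = (Δ (k + 1) / Δ k) • (f (k + 1) * (f k * e (k + 1))) := by
              rw [hEFE, mul_smul_comm]
          _ = (Δ (k + 1) / Δ k) • (f (k + 1) * e (k + 1)) := by
              rw [← mul_assoc, hffr]
  obtain ⟨hA, _⟩ := key n (by omega) le_rfl
  exact hA i hi1 (by omega)
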